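/- Let V be a finite-dimensional real vector space, g a symmetric bilinear form on V, ω a nonzero linear functional on V, and H = ker ω. Suppose the restriction of g to H is non-degenerate. For ξ ∈ V with ω(ξ) ≠ 0, define the bilinear form A(ξ) on V by A(ξ)(w,η) = g(w,η) − ω(ξ)⁻¹(g(w,ξ)ω(η) + ω(w)g(ξ,η)) + ω(ξ)⁻²·g(ξ,ξ)·ω(w)ω(η). Then the kernel of the linear map η ↦ A(ξ)(·,η) is exactly the line ℝξ. -/

import Mathlib

/-- The kernel of the Hessian-type form `A(ξ)` of a Kropina Lagrangian is exactly `ℝξ`. -/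
theorem stmt0 {V : Type*} [AddCommGroup V] [Module ℝ V] [FiniteDimensional ℝ V]
    (g : V →ₗ[ℝ] V →ₗ[ℝ] ℝ) (hg : ∀ v w, g v w = g w v)
    (ω : V →ₗ[ℝ] ℝ) (hω : ω ≠ 0)
    (hnd : ∀ v, ω v = 0 → (∀ w, ω w = 0 → g v w = 0) → v = 0)
    (ξ : V) (hξ : ω ξ ≠ 0) (η : V) :
    (∀ w : V,
      g w η - (ω ξ)⁻¹ * (g w ξ * ω η + ω w * g ξ η)
        + ((ω ξ)⁻¹) ^ 2 * (g ξ ξ * (ω w * ω η)) = 0)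
      ↔ ∃ c : ℝ, η = c • ξ := by
  constructor
  · intro hA
    set c : ℝ := ω η / ω ξ with hc
    refine ⟨c, ?_⟩
    have key : η - c • ξ = 0 := by
      apply hnd
      · simp [hc]
        field_simp
        ring
      · intro w hw
        have h := hA w
        rw [hw] at h
        have hgw : g w η - (ω ξ)⁻¹ * (g w ξ * ω η) = 0 := by linarith [h]
        have : g w (η - c • ξ) = 0 := by
          simp [map_sub, map_smul, hc]
          field_simp at hgw ⊢
          linarith
        rw [hg]; exact this
    exact sub_eq_zero.mp key
  · rintro ⟨c, rfl⟩ w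
    simp only [map_smul, smul_eq_mul]
    field_simp
    ring
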